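/- For 0 ≤ l ≤ m, the ideal M^l of A is generated (as an ideal) by the finite set G_l = {(x_1-1)^{i_1}···(x_m-1)^{i_m} : i_j ∈ {0,1}, i_1+···+i_m = l}. -/

import Mathlib

set_option synthInstance.maxHeartbeats 1000000
set_option maxHeartbeats 1000000

open MvPolynomial

noncomputable def gI (m : ℕ) (I : Finset (Fin m)) : MvPolynomial (Fin m) (ZMod 2) :=
  ∏ i ∈ I, (X i - 1)

noncomputable def XI (m : ℕ) (I : Finset (Fin m)) : MvPolynomial (Fin m) (ZMod 2) :=
  ∏ i ∈ I, X i

/-- The ideal (X₁²-1, …, Xₘ²-1). -/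
noncomputable def relIdeal (m : ℕ) : Ideal (MvPolynomial (Fin m) (ZMod 2)) :=
  Ideal.span {p | ∃ i : Fin m, p = X i ^ 2 - 1}

/-- The ambient algebra A = F₂[X₁,…,Xₘ]/(X₁²-1,…,Xₘ²-1). -/
abbrev Amb (m : ℕ) := MvPolynomial (Fin m) (ZMod 2) ⧸ relIdeal m

/-- The ideal M of A generated by the images of the Xᵢ - 1. -/
noncomputable def Mideal (m : ℕ) : Ideal (Amb m) :=
  Ideal.span {a | ∃ i : Fin m, a = Ideal.Quotient.mk (relIdeal m) (X i - 1)}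

lemma sq_zero (m : ℕ) (i : Fin m) :
    Ideal.Quotient.mk (relIdeal m) ((X i - 1)^2) = 0 := by
  rw [Ideal.Quotient.eq_zero_iff_mem]
  have h2 : (2 : MvPolynomial (Fin m) (ZMod 2)) = 0 := by
    have : ((2 : MvPolynomial (Fin m) (ZMod 2))) = C (2 : ZMod 2) := by
      simp [map_ofNat]
    rw [this, show (2 : ZMod 2) = 0 from rfl, map_zero]
  have h : ((X i - 1)^2 : MvPolynomial (Fin m) (ZMod 2)) = X i ^ 2 - 1 := by
    linear_combination (1 - X i) * h2
  rw [h]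
  exact Ideal.subset_span ⟨i, rfl⟩

/-- Mˡ is generated, as an ideal of A, by the finite set
G_l = {(x₁-1)^{i₁}⋯(xₘ-1)^{iₘ} : i₁+⋯+iₘ = l}. -/
theorem stmt4 (m l : ℕ) (hl : l ≤ m) :
    Mideal m ^ l =
      Ideal.span {a : Amb m | ∃ I : Finset (Fin m), I.card = l ∧
        a = Ideal.Quotient.mk (relIdeal m) (gI m I)} := by
  induction l with
  | zero =>
    rw [Submodule.pow_zero]
    symm
    rw [Ideal.one_eq_top, Ideal.eq_top_iff_one]
    exact Ideal.subset_span ⟨∅, by simp, by simp [gI]⟩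
  | succ l ih =>
    rw [Submodule.pow_succ, ih (Nat.le_of_succ_le hl)]
    rw [Mideal, Ideal.span_mul_span']
    apply le_antisymm
    · rw [Ideal.span_le]
      rintro _ ⟨g, ⟨I, hI, rfl⟩, x, ⟨i, rfl⟩, rfl⟩
      beta_reduce
      by_cases hmem : i ∈ I
      · have h1 : gI m I = (X i - 1) * gI m (I.erase i) :=
          (Finset.mul_prod_erase I _ hmem).symm
        have h2 : Ideal.Quotient.mk (relIdeal m) (gI m I) *
            Ideal.Quotient.mk (relIdeal m) (X i - 1) =
            Ideal.Quotient.mk (relIdeal m) ((X i - 1)^2) *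
            Ideal.Quotient.mk (relIdeal m) (gI m (I.erase i)) := by
          rw [← map_mul, ← map_mul, h1]; ring_nf
        rw [h2, sq_zero, zero_mul]
        exact Ideal.zero_mem _
      · have h2 : Ideal.Quotient.mk (relIdeal m) (gI m I) *
            Ideal.Quotient.mk (relIdeal m) (X i - 1)
            = Ideal.Quotient.mk (relIdeal m) (gI m (insert i I)) := by
          rw [← map_mul]
          congr 1
          show gI m I * (X i - 1) = gI m (insert i I)
          rw [gI, gI, Finset.prod_insert hmem]
          ring
        rw [h2]
        exact Ideal.subset_span
          ⟨insert i I, by rw [Finset.card_insert_of_notMem hmem, hI], rfl⟩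
    · rw [Ideal.span_le]
      rintro _ ⟨J, hJ, rfl⟩
      obtain ⟨i, hi⟩ := Finset.card_pos.mp (by omega : 0 < J.card)
      apply Ideal.subset_span
      refine ⟨Ideal.Quotient.mk (relIdeal m) (gI m (J.erase i)),
        ⟨J.erase i, by rw [Finset.card_erase_of_mem hi, hJ]; omega, rfl⟩,
        Ideal.Quotient.mk (relIdeal m) (X i - 1), ⟨i, rfl⟩, ?_⟩
      beta_reduce
      rw [← map_mul]
      congr 1
      show gI m (J.erase i) * (X i - 1) = gI m J
      rw [gI, gI, ← Finset.mul_prod_erase J _ hi]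
      ring
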